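/- Let f̄, g: ℝ^n → ℝ be convex, F = f̄ + g, let x_* minimize F, and let a positive sequence (a_k) with partial sums A_k = Σ_{ℓ≤k} a_ℓ be given. Suppose points x_k, x⁺_k satisfy x_{k+1} = (A_k/A_{k+1}) x_k + (a_{k+1}/A_{k+1}) x⁺_k. Then for any subgradient s ∈ ∂f̄(x_{k+1}): A_{k+1}(F(x_{k+1}) − F(x_*)) − A_k(F(x_k) − F(x_*)) ≤ a_{k+1}⟨s, x⁺_k − x_*⟩ + a_{k+1}(g(x⁺_k) − g(x_*)). -/

import Mathlib

open scoped RealInnerProductSpace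

theorem stmt10 {n : ℕ} (fbar g F : EuclideanSpace ℝ (Fin n) → ℝ)
    (hfconv : ConvexOn ℝ Set.univ fbar) (hgconv : ConvexOn ℝ Set.univ g)
    (hF : ∀ x, F x = fbar x + g x)
    (xstar : EuclideanSpace ℝ (Fin n)) (hmin : ∀ x, F xstar ≤ F x)
    (a : ℕ → ℝ) (hapos : ∀ k, 0 < a k)
    (A : ℕ → ℝ) (hA : ∀ k, A k = ∑ ℓ ∈ Finset.range (k + 1), a ℓ)
    (x xp : ℕ → EuclideanSpace ℝ (Fin n))
    (hrec : ∀ k, x (k + 1) = (A k / A (k + 1)) • x k + (a (k + 1) / A (k + 1)) • xp k)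
    (k : ℕ) (s : EuclideanSpace ℝ (Fin n))
    (hs : ∀ y, fbar (x (k + 1)) + ⟪s, y - x (k + 1)⟫ ≤ fbar y) :
    A (k + 1) * (F (x (k + 1)) - F xstar) - A k * (F (x k) - F xstar) ≤
      a (k + 1) * ⟪s, xp k - xstar⟫ + a (k + 1) * (g (xp k) - g xstar) := by
  have hApos : ∀ m, 0 < A m := by
    intro m
    rw [hA]
    exact Finset.sum_pos (fun i _ => hapos i) ⟨0, Finset.mem_range.2 (Nat.succ_pos m)⟩
  have hAne : A (k + 1) ≠ 0 := (hApos (k + 1)).ne'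
  have hAk1 : A (k + 1) = A k + a (k + 1) := by
    rw [hA, hA, Finset.sum_range_succ]
  have hθ1 : (0:ℝ) ≤ A k / A (k + 1) := div_nonneg (hApos k).le (hApos (k + 1)).le
  have hθ2 : (0:ℝ) ≤ a (k + 1) / A (k + 1) := div_nonneg (hapos _).le (hApos _).le
  have hsum : A k / A (k + 1) + a (k + 1) / A (k + 1) = 1 := by
    field_simp
    linarith [hAk1]
  have hg := hgconv.2 (Set.mem_univ (x k)) (Set.mem_univ (xp k)) hθ1 hθ2 hsum
  rw [← hrec k] at hg
  -- multiply convexity bound by A (k+1)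
  have hg' : A (k + 1) * g (x (k + 1)) ≤ A k * g (x k) + a (k + 1) * g (xp k) := by
    have h := mul_le_mul_of_nonneg_left hg (hApos (k + 1)).le
    simp only [smul_eq_mul] at h
    have e : A (k + 1) * (A k / A (k + 1) * g (x k) + a (k + 1) / A (k + 1) * g (xp k))
        = A k * g (x k) + a (k + 1) * g (xp k) := by field_simp
    linarith [e ▸ h]
  -- inner product identity
  have hinner : A (k + 1) * ⟪s, x (k + 1)⟫ = A k * ⟪s, x k⟫ + a (k + 1) * ⟪s, xp k⟫ := by
    rw [hrec k, inner_add_right, real_inner_smul_right, real_inner_smul_right]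
    field_simp
    try ring
  have h1 := hs (x k)
  have h2 := hs xstar
  rw [inner_sub_right] at h1 h2
  rw [inner_sub_right]
  have h1' : A k * (fbar (x (k + 1)) + (⟪s, x k⟫ - ⟪s, x (k + 1)⟫)) ≤ A k * fbar (x k) :=
    mul_le_mul_of_nonneg_left h1 (hApos k).le
  have h2' : a (k + 1) * (fbar (x (k + 1)) + (⟪s, xstar⟫ - ⟪s, x (k + 1)⟫)) ≤ a (k + 1) * fbar xstar :=
    mul_le_mul_of_nonneg_left h2 (hapos _).le
  simp only [hF]
  rw [hAk1] at hg' hinner ⊢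
  nlinarith [h1', h2', hg', hinner]
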